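/- Let ω ∈ ℂ be a primitive cube root of unity and let f = (x³ + y³ − xyz)·(3x + 3y + z)·(3x + 3ω²y + ωz)·(3x + 3ωy − (ω+1)z) ∈ ℂ[x,y,z]. Then f = 0 is a free curve with exponents (2,3); that is, AR(f) is a free ℂ[x,y,z]-module admitting a basis consisting of two Jacobian syzygies whose entries are homogeneous of degrees 2 and 3 respectively. -/

import Mathlib

open MvPolynomial

noncomputable section

abbrev S3 : Type := MvPolynomial (Fin 3) ℂ

/-- The module of Jacobian syzygies `AR(f)` of a polynomial `f ∈ ℂ[x,y,z]`. -/
def AR (f : S3) : Submodule S3 (Fin 3 → S3) where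
  carrier := {v | v 0 * pderiv 0 f + v 1 * pderiv 1 f + v 2 * pderiv 2 f = 0}
  add_mem' := by
    intro a b ha hb
    simp only [Set.mem_setOf_eq, Pi.add_apply] at *
    linear_combination ha + hb
  zero_mem' := by simp
  smul_mem' := by
    intro c v hv
    simp only [Set.mem_setOf_eq, Pi.smul_apply, smul_eq_mul] at *
    linear_combination c * hv

/-- The nodal cubic `E : x³ + y³ − xyz = 0`. -/
def Ecubic : S3 := X 0 ^ 3 + X 1 ^ 3 - X 0 * X 1 * X 2

end

noncomputable section FreeCurveAux

abbrev R2 : Type := MvPolynomial (Fin 2) ℂ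

/-- `E_y = 3y² − xz`. -/
def Eyp : S3 := 3 * X 1 ^ 2 - X 0 * X 2
/-- `E_x = 3x² − yz`. -/
def Exp : S3 := 3 * X 0 ^ 2 - X 1 * X 2
/-- `g = 54·E + z³`. -/
def Gg : S3 := 54 * Ecubic + X 2 ^ 3
/-- first entry of the degree-3 syzygy. -/
def A2 : S3 := 18 * X 0 ^ 2 * X 1 - 6 * X 1 ^ 2 * X 2 - X 0 * X 2 ^ 2
/-- second entry of the degree-3 syzygy. -/
def B2 : S3 := 18 * X 0 * X 1 ^ 2 - 3 * X 1 * X 2 ^ 2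

/-- The degree-2 syzygy. -/
def r1 : Fin 3 → S3 := ![Eyp, -Exp, 0]
/-- The degree-3 syzygy. -/
def r2 : Fin 3 → S3 := ![A2, B2, Gg]

/-- The cubic `g`, viewed as a monic cubic in `z` over `ℂ[x,y]` (after scaling by `1/54`). -/
def Qc : Polynomial R2 :=
  Polynomial.X ^ 3 + (Polynomial.C (-(X 0 * X 1)) * Polynomial.X
    + Polynomial.C (X 0 ^ 3 + C (1/54 : ℂ) * X 1 ^ 3))

lemma idA : A2 * Exp + B2 * Eyp = X 0 * X 1 * Gg - 3 * X 2 ^ 2 * Ecubic := by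
  simp only [A2, B2, Exp, Eyp, Gg, Ecubic]; ring

lemma mem_AR_iff {f : S3} {v : Fin 3 → S3} :
    v ∈ AR f ↔ v 0 * pderiv 0 f + v 1 * pderiv 1 f + v 2 * pderiv 2 f = 0 := Iff.rfl

lemma prime_X0_R1 : Prime (X 0 : MvPolynomial (Fin 1) ℂ) := by
  rw [← MulEquiv.prime_iff (finSuccEquiv ℂ 0).toRingEquiv.toMulEquiv]
  simpa [finSuccEquiv_X_zero] using Polynomial.prime_X (R := MvPolynomial (Fin 0) ℂ)

lemma prime_X1_R2 : Prime (X 1 : R2) := by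
  rw [← MulEquiv.prime_iff (finSuccEquiv ℂ 1).toRingEquiv.toMulEquiv]
  have : (finSuccEquiv ℂ 1) (X 1) = Polynomial.C (X 0) := by
    rw [show (1 : Fin 2) = Fin.succ 0 by rfl, finSuccEquiv_X_succ]
  simpa [this] using (Polynomial.prime_C_iff).mpr prime_X0_R1

lemma X1_ndvd : ¬ ((X 1 : R2) ∣ 3 * X 0 ^ 2) := by
  rintro ⟨w, hw⟩
  have := congrArg (aeval ![(1 : ℂ), 0]) hw
  simp at this

lemma irr_lin : Irreducible
    (Polynomial.C (-(X 1) : R2) * Polynomial.X + Polynomial.C (3 * X 0 ^ 2 : R2)) := by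
  set P := Polynomial.C (-(X 1) : R2) * Polynomial.X + Polynomial.C (3 * X 0 ^ 2 : R2) with hP
  have hne : (-(X 1) : R2) ≠ 0 := by simp [X_ne_zero]
  have hdeg : P.degree = 1 := Polynomial.degree_linear hne
  have hPne : P ≠ 0 := fun h => by simp [h] at hdeg
  constructor
  · intro hu
    have := Polynomial.degree_eq_zero_of_isUnit hu
    rw [hdeg] at this; exact absurd this (by norm_num)
  · intro u v huv
    have hu0 : u ≠ 0 := fun h => hPne (by simp [huv, h])
    have hv0 : v ≠ 0 := fun h => hPne (by simp [huv, h])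
    have hdeg2 : u.natDegree + v.natDegree = 1 := by
      have hnd := Polynomial.natDegree_eq_of_degree_eq_some hdeg
      rw [huv, Polynomial.natDegree_mul hu0 hv0] at hnd
      exact hnd
    have key : ∀ w w' : Polynomial R2, P = w * w' → w.natDegree = 0 → IsUnit w := by
      intro w w' hww hw0
      obtain ⟨r, rfl⟩ : ∃ r, w = Polynomial.C r :=
        ⟨w.coeff 0, (Polynomial.eq_C_of_natDegree_eq_zero hw0)⟩
      rw [Polynomial.isUnit_C]
      have h1 := congrArg (fun q => Polynomial.coeff q 1) hww
      simp only [hP, Polynomial.coeff_add, Polynomial.coeff_C_mul, Polynomial.coeff_X_one,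
        Polynomial.coeff_C, if_neg one_ne_zero, mul_one, add_zero] at h1
      have h0 := congrArg (fun q => Polynomial.coeff q 0) hww
      simp only [hP, Polynomial.coeff_add, Polynomial.coeff_C_mul, Polynomial.coeff_X_zero,
        Polynomial.coeff_C, if_pos rfl, mul_zero, zero_add] at h0
      have hr1 : r ∣ (X 1 : R2) := dvd_neg.mp ⟨w'.coeff 1, h1⟩
      obtain ⟨s, hs⟩ := hr1
      rcases prime_X1_R2.irreducible.isUnit_or_isUnit hs with h | h
      · exact h
      · exfalso
        obtain ⟨su, rfl⟩ := h
        have hXr : (X 1 : R2) ∣ r := ⟨(↑su⁻¹ : R2ˣ), by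
          rw [hs]; simp⟩
        exact X1_ndvd (hXr.trans ⟨w'.coeff 0, h0⟩)
    rcases Nat.add_eq_one_iff.mp hdeg2 with ⟨h1, _⟩ | ⟨_, h2⟩
    · exact Or.inl (key u v huv h1)
    · exact Or.inr (key v u (by rw [huv, mul_comm]) h2)

lemma prime_Eyp : Prime Eyp := by
  rw [← MulEquiv.prime_iff (finSuccEquiv ℂ 2).toRingEquiv.toMulEquiv]
  have himg : (finSuccEquiv ℂ 2).toRingEquiv.toMulEquiv Eyp
      = Polynomial.C (-(X 1) : R2) * Polynomial.X + Polynomial.C (3 * X 0 ^ 2 : R2) := by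
    have h1 : (X 1 : S3) = X (Fin.succ 0) := rfl
    have h2 : (X 2 : S3) = X (Fin.succ 1) := rfl
    show (finSuccEquiv ℂ 2) Eyp = _
    simp only [Eyp, h1, h2, map_sub, map_mul, map_pow, map_ofNat, map_neg,
      finSuccEquiv_X_zero, finSuccEquiv_X_succ]
    ring
  rw [himg]
  exact (UniqueFactorizationMonoid.irreducible_iff_prime).mp irr_lin

lemma no_root (a : R2) :
    a ^ 3 + (-(X 0 * X 1)) * a + (X 0 ^ 3 + C (1/54 : ℂ) * X 1 ^ 3) ≠ 0 := by
  intro heval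
  have hp := congrArg (aeval ![(Polynomial.X : Polynomial ℂ), 1]) heval
  set p : Polynomial ℂ := aeval ![(Polynomial.X : Polynomial ℂ), 1] a with hpdef
  simp only [map_add, map_mul, map_pow, map_neg, map_zero, aeval_X, aeval_C,
    Matrix.cons_val_zero, Matrix.cons_val_one, Matrix.head_cons, mul_one, one_pow] at hp
  -- hp : p^3 - X*p + X^3 + C(1/54) = 0   (roughly)
  have hq : p ^ 3 = Polynomial.X * p - Polynomial.X ^ 3 - Polynomial.C (1/54 : ℂ) := by
    rw [show Polynomial.C (1/54 : ℂ) = algebraMap ℂ (Polynomial ℂ) (1/54) from rfl]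
    linear_combination hp
  have hd : p.natDegree ≤ 1 := by
    by_contra hcon
    push_neg at hcon
    have h1 : (p ^ 3).natDegree = 3 * p.natDegree := by
      simp [Polynomial.natDegree_pow]
    have h2 : (Polynomial.X * p - Polynomial.X ^ 3 - Polynomial.C (1/54 : ℂ)).natDegree
        ≤ p.natDegree + 1 := by
      refine le_trans (Polynomial.natDegree_sub_le _ _) (max_le (le_trans
        (Polynomial.natDegree_sub_le _ _) (max_le ?_ ?_)) ?_)
      · exact le_trans (Polynomial.natDegree_mul_le) (by simp [Polynomial.natDegree_X]; omega)
      · simp [Polynomial.natDegree_X_pow]; omega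
      · simp
    rw [hq] at h1
    omega
  obtain ⟨a0, b0, hab⟩ := Polynomial.exists_eq_X_add_C_of_natDegree_le_one hd
  rw [hab] at hq
  have hE0 := congrArg (Polynomial.eval 0) hq
  have hE1 := congrArg (Polynomial.eval 1) hq
  have hEm1 := congrArg (Polynomial.eval (-1)) hq
  have hE2 := congrArg (Polynomial.eval 2) hq
  simp only [Polynomial.eval_add, Polynomial.eval_sub, Polynomial.eval_mul, Polynomial.eval_pow,
    Polynomial.eval_X, Polynomial.eval_C, Polynomial.eval_one, Polynomial.eval_neg] at hE0 hE1 hEm1 hE2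
  have h3 : a0 ^ 3 + 1 = 0 := by
    linear_combination (1/6 : ℂ) * hE2 - (1/2 : ℂ) * hE1 - (1/6 : ℂ) * hEm1 + (1/2 : ℂ) * hE0
  have h2c : 3 * a0 ^ 2 * b0 - a0 = 0 := by
    linear_combination (1/2 : ℂ) * hE1 + (1/2 : ℂ) * hEm1 - hE0
  have h0 : b0 ^ 3 + 1/54 = 0 := by linear_combination hE0
  have ha : a0 ≠ 0 := by
    intro h; rw [h] at h3; norm_num at h3
  have hab1 : 3 * a0 * b0 = 1 := by
    rcases mul_eq_zero.mp (show a0 * (3 * a0 * b0 - 1) = 0 by linear_combination h2c) with h | h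
    · exact absurd h ha
    · linear_combination h
  have h27 : (27 : ℂ) * a0 ^ 3 * b0 ^ 3 = 1 := by
    linear_combination (9 * a0 ^ 2 * b0 ^ 2 + 3 * a0 * b0 + 1) * hab1
  have : (1 : ℂ) / 2 = 1 := by
    linear_combination h27 - 27 * b0 ^ 3 * h3 + 27 * h0
  norm_num at this

lemma monic_Qc : Qc.Monic :=
  Polynomial.monic_X_pow_add
    (lt_of_le_of_lt Polynomial.degree_linear_le (by norm_num))

lemma natdeg_Qc : Qc.natDegree = 3 := by
  have h : Qc.degree = 3 := by
    rw [Qc, Polynomial.degree_add_eq_left_of_degree_lt]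
    · exact_mod_cast Polynomial.degree_X_pow 3
    · rw [Polynomial.degree_X_pow]
      exact lt_of_le_of_lt Polynomial.degree_linear_le (by norm_num)
  exact Polynomial.natDegree_eq_of_degree_eq_some h

lemma irr_Qc : Irreducible Qc := by
  rw [monic_Qc.irreducible_iff_roots_eq_zero_of_degree_le_three
    (by rw [natdeg_Qc]; norm_num) (by rw [natdeg_Qc]),
    Multiset.eq_zero_iff_forall_notMem]
  intro a ha
  rw [Polynomial.mem_roots monic_Qc.ne_zero] at ha
  apply no_root a
  simp only [Qc, Polynomial.IsRoot.def, Polynomial.eval_add, Polynomial.eval_mul,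
    Polynomial.eval_pow, Polynomial.eval_X, Polynomial.eval_C] at ha
  linear_combination ha

lemma hinv54 : (54 : Polynomial R2) * Polynomial.C (C (1/54 : ℂ)) = 1 := by
  rw [show (54 : Polynomial R2) = Polynomial.C (C (54 : ℂ)) by simp [map_ofNat],
    ← map_mul, ← map_mul]
  norm_num

lemma prime_Gg : Prime Gg := by
  rw [← MulEquiv.prime_iff (finSuccEquiv ℂ 2).toRingEquiv.toMulEquiv]
  have himg : (finSuccEquiv ℂ 2).toRingEquiv.toMulEquiv Gg = Qc * 54 := by
    show (finSuccEquiv ℂ 2) Gg = _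
    have h1 : (X 1 : S3) = X (Fin.succ 0) := rfl
    have h2 : (X 2 : S3) = X (Fin.succ 1) := rfl
    simp only [Gg, Ecubic, h1, h2, map_add, map_sub, map_mul, map_pow, map_ofNat, map_neg,
      finSuccEquiv_X_zero, finSuccEquiv_X_succ, Qc]
    linear_combination (- Polynomial.C (X 1) ^ 3) * hinv54
  rw [himg]
  exact (associated_mul_unit_left Qc 54 (IsUnit.of_mul_eq_one _ hinv54)).symm.prime
    ((UniqueFactorizationMonoid.irreducible_iff_prime).mp irr_Qc)

lemma Gg_not_dvd_X2 : ¬ (Gg ∣ (X 2 : S3)) := by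
  rintro ⟨w, hw⟩
  have h := congrArg (aeval ![0, 0, (Polynomial.X : Polynomial ℂ)]) hw
  simp only [Gg, Ecubic, map_add, map_sub, map_mul, map_pow, map_ofNat, aeval_X,
    Matrix.cons_val_zero, Matrix.cons_val_one, Matrix.head_cons, Matrix.cons_val_two,
    Matrix.tail_cons] at h
  rw [show ((0:Polynomial ℂ) ^ 3 + 0 ^ 3 - 0 * 0 * Polynomial.X) = 0 by ring] at h
  rw [mul_zero, zero_add] at h
  set u := aeval ![0, 0, (Polynomial.X : Polynomial ℂ)] w with hu
  by_cases h0 : u = 0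
  · rw [h0, mul_zero] at h; exact Polynomial.X_ne_zero h
  · have hd := congrArg Polynomial.natDegree h
    rw [Polynomial.natDegree_X, Polynomial.natDegree_mul (pow_ne_zero _ Polynomial.X_ne_zero) h0,
      Polynomial.natDegree_X_pow] at hd
    omega

lemma Eyp_not_dvd_Exp : ¬ (Eyp ∣ Exp) := by
  rintro ⟨w, hw⟩
  have h := congrArg (aeval ![(Polynomial.X : Polynomial ℂ), 0, 0]) hw
  simp only [Exp, Eyp, map_sub, map_mul, map_pow, map_ofNat, aeval_X,
    Matrix.cons_val_zero, Matrix.cons_val_one, Matrix.head_cons, Matrix.cons_val_two,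
    Matrix.tail_cons] at h
  rw [show ((3:Polynomial ℂ) * 0 ^ 2 - Polynomial.X * 0) = 0 by ring] at h
  rw [zero_mul] at h
  have h2 := congrArg (fun q => Polynomial.coeff q 2) h
  simp [Polynomial.coeff_ofNat_mul] at h2

lemma isUnit3 : IsUnit (3 : S3) :=
  IsUnit.of_mul_eq_one (C (1/3 : ℂ))
    (by rw [show (3:S3) = C (3:ℂ) by simp [map_ofNat], ← map_mul]; norm_num)

lemma span_lemma (v : Fin 3 → S3)
    (hv : v 0 * (Gg * Exp) + v 1 * (Gg * Eyp) +
      v 2 * (Gg * (-(X 0 * X 1)) + 3 * X 2 ^ 2 * Ecubic) = 0) :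
    ∃ lam m : S3, v = lam • r1 + m • r2 := by
  have hGne : Gg ≠ 0 := prime_Gg.ne_zero
  have hdvd : Gg ∣ v 2 * (3 * X 2 ^ 2 * Ecubic) :=
    ⟨-(v 0 * Exp + v 1 * Eyp + v 2 * (-(X 0 * X 1))), by linear_combination hv⟩
  have hndvd : ¬ Gg ∣ 3 * X 2 ^ 2 * Ecubic := by
    intro h
    rcases prime_Gg.dvd_mul.mp h with h1 | h2
    · rcases prime_Gg.dvd_mul.mp h1 with h3 | h4
      · exact prime_Gg.not_unit (isUnit_of_dvd_unit h3 isUnit3)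
      · exact Gg_not_dvd_X2 (prime_Gg.dvd_of_dvd_pow h4)
    · have hz : Gg ∣ (X 2 : S3) ^ 3 := by
        have hd : Gg ∣ Gg - 54 * Ecubic := dvd_sub dvd_rfl (h2.mul_left 54)
        rwa [show Gg - 54 * Ecubic = (X 2 : S3) ^ 3 by rw [Gg]; ring] at hd
      exact Gg_not_dvd_X2 (prime_Gg.dvd_of_dvd_pow hz)
  obtain ⟨m, hm⟩ := (prime_Gg.dvd_mul.mp hdvd).resolve_right hndvd
  have key2 : (v 0 - m * A2) * Exp + (v 1 - m * B2) * Eyp = 0 := by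
    apply mul_left_cancel₀ hGne
    rw [mul_zero]
    linear_combination hv - m * Gg * idA - (Gg * (-(X 0 * X 1)) + 3 * X 2 ^ 2 * Ecubic) * hm
  have h5 : Eyp ∣ (v 0 - m * A2) * Exp := ⟨-(v 1 - m * B2), by linear_combination key2⟩
  obtain ⟨lam, hlam⟩ := (prime_Eyp.dvd_mul.mp h5).resolve_right Eyp_not_dvd_Exp
  refine ⟨lam, m, ?_⟩
  have hEyne : Eyp ≠ 0 := prime_Eyp.ne_zero
  have hv1 : v 1 = m * B2 - lam * Exp := by
    apply mul_left_cancel₀ hEyne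
    linear_combination key2 - Exp * hlam
  funext t
  fin_cases t <;>
    simp only [Fin.zero_eta, Fin.mk_one, Fin.reduceFinMk, Pi.add_apply, Pi.smul_apply,
      smul_eq_mul, r1, r2, Fin.isValue, Matrix.cons_val_zero, Matrix.cons_val_one,
      Matrix.head_cons, Matrix.cons_val_two, Matrix.tail_cons]
  · linear_combination hlam
  · linear_combination hv1
  · linear_combination hm

end FreeCurveAux

theorem free_cubic_three_lines (ω : ℂ) (hω : IsPrimitiveRoot ω 3) :
    let f : S3 := Ecubic *
      (C 3 * X 0 + C 3 * X 1 + X 2) *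
      (C 3 * X 0 + C 3 * C (ω ^ 2) * X 1 + C ω * X 2) *
      (C 3 * X 0 + C 3 * C ω * X 1 - C (ω + 1) * X 2)
    ∃ b : Module.Basis (Fin 2) S3 (AR f),
      (∀ t : Fin 3, MvPolynomial.IsHomogeneous ((b 0 : Fin 3 → S3) t) 2) ∧
      (∀ t : Fin 3, MvPolynomial.IsHomogeneous ((b 1 : Fin 3 → S3) t) 3) := by
  intro f
  have h3 : ω ^ 3 = 1 := hω.pow_eq_one
  have hne : ω ≠ 1 := hω.ne_one (by norm_num)
  have hsum : ω ^ 2 + ω + 1 = 0 := by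
    rcases mul_eq_zero.mp (show (ω - 1) * (ω ^ 2 + ω + 1) = 0 by linear_combination h3)
      with h | h
    · exact absurd (sub_eq_zero.mp h) hne
    · exact h
  have hCsum : (C ω : S3) ^ 2 + C ω + 1 = 0 := by
    have := congrArg (fun t : ℂ => (C t : S3)) hsum
    simpa using this
  have hf : f = Ecubic * (C (27:ℂ) * Ecubic + X 2 ^ 3) := by
    show Ecubic * (C 3 * X 0 + C 3 * X 1 + X 2) *
      (C 3 * X 0 + C 3 * C (ω ^ 2) * X 1 + C ω * X 2) *
      (C 3 * X 0 + C 3 * C ω * X 1 - C (ω + 1) * X 2) = _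
    simp only [map_pow, map_add, map_one, map_ofNat]
    rw [Ecubic]
    linear_combination ((X 0 ^ 3 + X 1 ^ 3 - X 0 * X 1 * X 2 : S3) *
      ((27 * X 0^2 * X 1 - 3 * X 0 * X 2^2 + 18 * X 0 * X 1 * X 2 - X 2^3 - 27 * X 1^3)
        + C ω * (27 * X 0 * X 1^2 - 9 * X 0 * X 1 * X 2 + 27 * X 1^3 - 3 * X 1 * X 2^2))) * hCsum
  have hp0 : pderiv 0 f = Gg * Exp := by
    rw [hf]
    simp only [Ecubic, pderiv_mul, pderiv_pow, pderiv_X, pderiv_C, map_sub, map_add,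
      Pi.single_apply]
    simp only [map_ofNat, Fin.isValue]
    simp [Pi.single_apply, Gg, Exp, Ecubic]
    ring
  have hp1 : pderiv 1 f = Gg * Eyp := by
    rw [hf]
    simp only [Ecubic, pderiv_mul, pderiv_pow, pderiv_X, pderiv_C, map_sub, map_add,
      Pi.single_apply]
    simp only [map_ofNat, Fin.isValue]
    simp [Pi.single_apply, Gg, Eyp, Ecubic]
    ring
  have hp2 : pderiv 2 f = Gg * (-(X 0 * X 1)) + 3 * X 2 ^ 2 * Ecubic := by
    rw [hf]
    simp only [Ecubic, pderiv_mul, pderiv_pow, pderiv_X, pderiv_C, map_sub, map_add,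
      Pi.single_apply]
    simp only [map_ofNat, Fin.isValue]
    simp [Pi.single_apply, Gg, Ecubic]
    ring
  have hmem1 : r1 ∈ AR f := by
    rw [mem_AR_iff, hp0, hp1, hp2]
    simp only [r1, Matrix.cons_val_zero, Matrix.cons_val_one, Matrix.head_cons,
      Matrix.cons_val_two, Matrix.tail_cons, Eyp, Exp, Gg, Ecubic]
    ring
  have hmem2 : r2 ∈ AR f := by
    rw [mem_AR_iff, hp0, hp1, hp2]
    simp only [r2, Matrix.cons_val_zero, Matrix.cons_val_one, Matrix.head_cons,
      Matrix.cons_val_two, Matrix.tail_cons, A2, B2, Eyp, Exp, Gg, Ecubic]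
    ring
  set w1 : AR f := ⟨r1, hmem1⟩ with hw1
  set w2 : AR f := ⟨r2, hmem2⟩ with hw2
  have hli : LinearIndependent S3 ![w1, w2] := by
    rw [LinearIndependent.pair_iff]
    intro s t hst
    have hval : s • r1 + t • r2 = 0 := by
      have := congrArg (fun u : AR f => (u : Fin 3 → S3)) hst
      simpa [hw1, hw2] using this
    have ht : t = 0 := by
      have h2 := congrArg (fun u : Fin 3 → S3 => u 2) hval
      simpa [r1, r2, prime_Gg.ne_zero] using h2
    have hs : s = 0 := by
      have h0 := congrArg (fun u : Fin 3 → S3 => u 0) hval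
      simpa [r1, r2, ht, prime_Eyp.ne_zero] using h0
    exact ⟨hs, ht⟩
  have hspan : ⊤ ≤ Submodule.span S3 (Set.range ![w1, w2]) := by
    rintro ⟨v, hv⟩ -
    rw [mem_AR_iff, hp0, hp1, hp2] at hv
    obtain ⟨lam, m, hvm⟩ := span_lemma v hv
    have hrange : Set.range ![w1, w2] = {w1, w2} := by
      simp [Matrix.range_cons, Matrix.range_empty, Set.pair_comm]
    rw [hrange, Submodule.mem_span_pair]
    refine ⟨lam, m, Subtype.ext ?_⟩
    simp only [Submodule.coe_add, SetLike.val_smul]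
    exact hvm.symm
  refine ⟨Module.Basis.mk hli hspan, ?_, ?_⟩
  · intro t
    rw [Module.Basis.mk_apply]
    show IsHomogeneous (r1 t) 2
    have hEy : IsHomogeneous Eyp 2 := by
      have h1 := (isHomogeneous_C (Fin 3) (3:ℂ)).mul ((isHomogeneous_X ℂ (1:Fin 3)).pow 2)
      have h2 := (isHomogeneous_X ℂ (0:Fin 3)).mul (isHomogeneous_X ℂ (2:Fin 3))
      have := h1.sub h2
      norm_num at this
      simpa [Eyp, map_ofNat] using this
    have hEx : IsHomogeneous Exp 2 := by
      have h1 := (isHomogeneous_C (Fin 3) (3:ℂ)).mul ((isHomogeneous_X ℂ (0:Fin 3)).pow 2)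
      have h2 := (isHomogeneous_X ℂ (1:Fin 3)).mul (isHomogeneous_X ℂ (2:Fin 3))
      have := h1.sub h2
      norm_num at this
      simpa [Exp, map_ofNat] using this
    fin_cases t
    · simpa [r1] using hEy
    · simpa [r1] using hEx.neg
    · simpa [r1] using isHomogeneous_zero (Fin 3) ℂ 2
  · intro t
    rw [Module.Basis.mk_apply]
    show IsHomogeneous (r2 t) 3
    have hA : IsHomogeneous A2 3 := by
      have h1 := ((isHomogeneous_C (Fin 3) (18:ℂ)).mul
        ((isHomogeneous_X ℂ (0:Fin 3)).pow 2)).mul (isHomogeneous_X ℂ (1:Fin 3))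
      have h2 := ((isHomogeneous_C (Fin 3) (6:ℂ)).mul
        ((isHomogeneous_X ℂ (1:Fin 3)).pow 2)).mul (isHomogeneous_X ℂ (2:Fin 3))
      have h3' := (isHomogeneous_X ℂ (0:Fin 3)).mul ((isHomogeneous_X ℂ (2:Fin 3)).pow 2)
      have := (h1.sub h2).sub h3'
      norm_num at this
      simpa [A2, map_ofNat] using this
    have hB : IsHomogeneous B2 3 := by
      have h1 := ((isHomogeneous_C (Fin 3) (18:ℂ)).mul
        (isHomogeneous_X ℂ (0:Fin 3))).mul ((isHomogeneous_X ℂ (1:Fin 3)).pow 2)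
      have h2 := ((isHomogeneous_C (Fin 3) (3:ℂ)).mul
        (isHomogeneous_X ℂ (1:Fin 3))).mul ((isHomogeneous_X ℂ (2:Fin 3)).pow 2)
      have := h1.sub h2
      norm_num at this
      simpa [B2, map_ofNat] using this
    have hG : IsHomogeneous Gg 3 := by
      have hEc : IsHomogeneous Ecubic 3 := by
        have h1 := (isHomogeneous_X ℂ (0:Fin 3)).pow 3
        have h2 := (isHomogeneous_X ℂ (1:Fin 3)).pow 3
        have h3' := ((isHomogeneous_X ℂ (0:Fin 3)).mul
          (isHomogeneous_X ℂ (1:Fin 3))).mul (isHomogeneous_X ℂ (2:Fin 3))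
        have := (h1.add h2).sub h3'
        norm_num at this
        simpa [Ecubic] using this
      have h1 := (isHomogeneous_C (Fin 3) (54:ℂ)).mul hEc
      have h2 := (isHomogeneous_X ℂ (2:Fin 3)).pow 3
      have := h1.add h2
      norm_num at this
      simpa [Gg, map_ofNat] using this
    fin_cases t
    · simpa [r2] using hA
    · simpa [r2] using hB
    · simpa [r2] using hG
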